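/- Let R = {A, B, C} be a relation schema with three distinct attributes, each with domain {0, 1, *}, and let r be the relation over R consisting of the tuples (A, B, C) = (0, 0, 0), (*, 1, 0), (*, 0, 1), (1, 1, 1), each with multiplicity 1. Then r satisfies A⊥_p B and AB⊥_p C, but r does not satisfy A⊥_p BC. In particular, the exchange rule (from X⊥_p Y and XY⊥_p Z infer X⊥_p YZ) is not sound for possible independence atoms. -/

import Mathlib

/-- A relation schema over a finite attribute type `Attr`: each attribute has a
domain with a distinguished null symbol `*` and at least two non-null values. -/
structure Schema (Attr : Type) where
  Dom : Attr → Type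
  null : ∀ A, Dom A
  two_nonnull : ∀ A, ∃ x y : Dom A, x ≠ null A ∧ y ≠ null A ∧ x ≠ y

variable {Attr : Type} [DecidableEq Attr]

/-- A tuple over the schema: a choice of a domain value for each attribute. -/
abbrev Tuple (S : Schema Attr) : Type := ∀ A, S.Dom A

/-- A relation: a finite multiset of tuples. -/
abbrev DBRel (S : Schema Attr) : Type := Multiset (Tuple S)

/-- `t` is non-null on every attribute of `X` (i.e. the projection of `t` on `X` is complete). -/
def completeOn (S : Schema Attr) (X : Finset Attr) (t : Tuple S) : Prop :=
  ∀ A ∈ X, t A ≠ S.null A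

/-- `t` and `t'` agree on all attributes of `X` (i.e. `t(X) = t'(X)`). -/
def agreeOn (S : Schema Attr) (X : Finset Attr) (t t' : Tuple S) : Prop :=
  ∀ A ∈ X, t A = t' A

/-- `r` satisfies the independence atom `X ⊥ Y`. -/
def satIA (S : Schema Attr) (r : DBRel S) (X Y : Finset Attr) : Prop :=
  (∀ t ∈ r, completeOn S (X ∪ Y) t) ∧
    ∀ t1 ∈ r, ∀ t2 ∈ r, ∃ t ∈ r, agreeOn S X t t1 ∧ agreeOn S Y t t2

/-- `t'` is a grounding of `t`: a complete tuple agreeing with `t` on its non-null entries. -/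
def groundsTuple (S : Schema Attr) (t' t : Tuple S) : Prop :=
  (∀ A, t' A ≠ S.null A) ∧ ∀ A, t A ≠ S.null A → t' A = t A

/-- `r'` is a grounding of `r`: each copy of each tuple is grounded independently. -/
def grounds (S : Schema Attr) (r' r : DBRel S) : Prop :=
  Multiset.Rel (groundsTuple S) r' r

/-- `r` satisfies the possible independence atom `X ⊥ₚ Y`. -/
def satPIA (S : Schema Attr) (r : DBRel S) (X Y : Finset Attr) : Prop :=
  ∃ r', grounds S r' r ∧ satIA S r' X Y

/-- `r` satisfies the certain independence atom `X ⊥_c Y`. -/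
def satCIA (S : Schema Attr) (r : DBRel S) (X Y : Finset Attr) : Prop :=
  ∀ r', grounds S r' r → satIA S r' X Y

/-- The schema R = {A, B, C} (A = 0, B = 1, C = 2), each attribute with domain
{0, 1, *} coded as `Option Bool` with `none` the null symbol. -/
def S3 : Schema (Fin 3) where
  Dom := fun _ => Option Bool
  null := fun _ => none
  two_nonnull := fun _ => ⟨some false, some true, by simp, by simp, by simp⟩

/-- The relation r with tuples (0,0,0), (*,1,0), (*,0,1), (1,1,1), each of multiplicity 1. -/
def rEx : DBRel S3 :=
  { ![some false, some false, some false],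
    ![none, some true, some false],
    ![none, some false, some true],
    ![some true, some true, some true] }


instance {α : Type*} {m : Multiset α} {p : α → Prop} [DecidablePred p] :
    Decidable (∃ x ∈ m, p x) := Multiset.decidableExistsMultiset

instance (A : Fin 3) : DecidableEq (S3.Dom A) := inferInstanceAs (DecidableEq (Option Bool))

/-- Grounding witnessing A ⊥ₚ B. -/
def rG1 : DBRel S3 :=
  { ![some false, some false, some false],
    ![some false, some true, some false],
    ![some true, some false, some true],
    ![some true, some true, some true] }

/-- Grounding witnessing AB ⊥ₚ C. -/
def rG2 : DBRel S3 :=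
  { ![some false, some false, some false],
    ![some true, some true, some false],
    ![some false, some false, some true],
    ![some true, some true, some true] }

lemma grounds_rG1 : grounds S3 rG1 rEx := by
  refine Multiset.Rel.cons ⟨by unfold S3; decide, by unfold S3; decide⟩ (Multiset.Rel.cons ⟨by unfold S3; decide, by unfold S3; decide⟩
    (Multiset.Rel.cons ⟨by unfold S3; decide, by unfold S3; decide⟩ (Multiset.Rel.cons ⟨by unfold S3; decide, by unfold S3; decide⟩
      Multiset.Rel.zero)))

lemma grounds_rG2 : grounds S3 rG2 rEx := by
  refine Multiset.Rel.cons ⟨by unfold S3; decide, by unfold S3; decide⟩ (Multiset.Rel.cons ⟨by unfold S3; decide, by unfold S3; decide⟩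
    (Multiset.Rel.cons ⟨by unfold S3; decide, by unfold S3; decide⟩ (Multiset.Rel.cons ⟨by unfold S3; decide, by unfold S3; decide⟩
      Multiset.Rel.zero)))

lemma satIA_rG1 : satIA S3 rG1 {0} {1} := by
  unfold satIA completeOn agreeOn rG1
  decide

lemma satIA_rG2 : satIA S3 rG2 ({0} ∪ {1}) {2} := by
  unfold satIA completeOn agreeOn rG2
  decide

/-- r satisfies a ⊥ₚ b and ab ⊥ₚ c but not a ⊥ₚ bc; ... -/
theorem exchange_not_sound_for_pia :
    satPIA S3 rEx {0} {1} ∧ satPIA S3 rEx ({0} ∪ {1}) {2} ∧ ¬ satPIA S3 rEx {0} ({1} ∪ {2}) ∧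
    ¬ (∀ (r : DBRel S3) (X Y Z : Finset (Fin 3)),
        satPIA S3 r X Y → satPIA S3 r (X ∪ Y) Z → satPIA S3 r X (Y ∪ Z)) := by
  have hno : ¬ satPIA S3 rEx {0} ({1} ∪ {2}) := by
    rintro ⟨r', hg, hcomp, hsat⟩
    rw [rEx, grounds] at hg
    erw [Multiset.insert_eq_cons, Multiset.rel_cons_right] at hg
    obtain ⟨g1, s1, hg1, hg, rfl⟩ := hg
    erw [Multiset.insert_eq_cons, Multiset.rel_cons_right] at hg
    obtain ⟨g2, s2, hg2, hg, rfl⟩ := hg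
    erw [Multiset.insert_eq_cons, Multiset.rel_cons_right] at hg
    obtain ⟨g3, s3, hg3, hg, rfl⟩ := hg
    erw [show ({![some true, some true, some true]} : DBRel S3) = _ ::ₘ 0 from rfl, Multiset.rel_cons_right] at hg
    obtain ⟨g4, s4, hg4, hg, rfl⟩ := hg
    rw [Multiset.rel_zero_right] at hg
    subst hg
    have h1A : g1 0 = some false := hg1.2 0 (by unfold S3; decide)
    have h1B : g1 1 = some false := hg1.2 1 (by unfold S3; decide)
    have h2C : g2 2 = some false := hg2.2 2 (by unfold S3; decide)
    have h3B : g3 1 = some false := hg3.2 1 (by unfold S3; decide)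
    have h4A : g4 0 = some true := hg4.2 0 (by unfold S3; decide)
    have h4B : g4 1 = some true := hg4.2 1 (by unfold S3; decide)
    have h4C : g4 2 = some true := hg4.2 2 (by unfold S3; decide)
    have hm1 : g1 ∈ g1 ::ₘ g2 ::ₘ g3 ::ₘ g4 ::ₘ 0 := by simp
    have hm4 : g4 ∈ g1 ::ₘ g2 ::ₘ g3 ::ₘ g4 ::ₘ 0 := by simp
    obtain ⟨t, ht, hA, hBC⟩ := hsat g1 hm1 g4 hm4
    have htA : t 0 = some false := by rw [hA 0 (by decide), h1A]
    have htB : t 1 = some true := by rw [hBC 1 (by decide), h4B]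
    have htC : t 2 = some true := by rw [hBC 2 (by decide), h4C]
    simp only [Multiset.mem_cons, Multiset.notMem_zero, or_false] at ht
    rcases ht with h | h | h | h <;> subst h
    · rw [h1B] at htB; exact absurd htB (by unfold S3; decide)
    · rw [h2C] at htC; exact absurd htC (by unfold S3; decide)
    · rw [h3B] at htB; exact absurd htB (by unfold S3; decide)
    · rw [h4A] at htA; exact absurd htA (by unfold S3; decide)
  exact ⟨⟨rG1, grounds_rG1, satIA_rG1⟩, ⟨rG2, grounds_rG2, satIA_rG2⟩, hno,
    fun h => hno (h rEx {0} {1} {2} ⟨rG1, grounds_rG1, satIA_rG1⟩ ⟨rG2, grounds_rG2, satIA_rG2⟩)⟩
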